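/- Let K ⊂ ℂ be a compact set and p ≥ 1 an integer. Then the function f : ℂ → ℝ defined by f(z) = ∫_K (log |z - w|)^p dλ(w), where λ is Lebesgue measure on ℂ, is continuous. -/

import Mathlib

open MeasureTheory Set Metric Filter Topology

namespace LogPowAux

/-- The absolute-value integrand. -/
noncomputable def g (p : ℕ) (u : ℂ) : ℝ := |Real.log (‖u‖)| ^ p

lemma g_nonneg (p : ℕ) (u : ℂ) : 0 ≤ g p u := pow_nonneg (abs_nonneg _) p

lemma measurable_g (p : ℕ) : Measurable (g p) :=
  ((Real.measurable_log.comp continuous_norm.measurable).abs).pow_const p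

lemma oneD (R : ℝ) :
    IntegrableOn (fun x : ℝ => |x| ^ (-(1/4) : ℝ)) (Icc (-R) R) := by
  rcases le_or_gt R 0 with hR | hR
  · have hz : (volume : Measure ℝ) (Icc (-R) R) = 0 := by
      rw [Real.volume_Icc]
      exact ENNReal.ofReal_eq_zero.mpr (by linarith)
    rw [IntegrableOn, Measure.restrict_eq_zero.mpr hz]
    exact integrable_zero_measure
  · have h1 : IntegrableOn (fun x : ℝ => x ^ (-(1/4) : ℝ)) (Ioc 0 R) := by
      have := intervalIntegral.intervalIntegrable_rpow' (a := 0) (b := R)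
        (by norm_num : (-1:ℝ) < -(1/4))
      rwa [intervalIntegrable_iff, uIoc_of_le hR.le] at this
    have h2 : IntegrableOn (fun x : ℝ => |x| ^ (-(1/4) : ℝ)) (Ioc 0 R) :=
      h1.congr_fun (fun x hx => by rw [abs_of_pos hx.1]) measurableSet_Ioc
    have h2' : IntegrableOn (fun x : ℝ => |x| ^ (-(1/4) : ℝ)) (Icc 0 R) :=
      h2.congr_set_ae Ioc_ae_eq_Icc.symm
    have h3 : IntegrableOn (fun x : ℝ => |x| ^ (-(1/4) : ℝ)) (Ico (-R) 0) := by
      have hemb : MeasurableEmbedding (fun x : ℝ => -x) :=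
        (Homeomorph.neg ℝ).measurableEmbedding
      have h4 := (MeasurePreserving.integrableOn_comp_preimage
        (Measure.measurePreserving_neg (volume : Measure ℝ)) hemb
        (f := fun x : ℝ => |x| ^ (-(1/4) : ℝ)) (s := Ioc 0 R)).2 h2
      have hpre : (fun x : ℝ => -x) ⁻¹' (Ioc 0 R) = Ico (-R) 0 := by
        ext x
        simp only [mem_preimage, mem_Ioc, mem_Ico]
        constructor
        · rintro ⟨ha, hb⟩; constructor <;> linarith
        · rintro ⟨ha, hb⟩; constructor <;> linarith
      rw [hpre] at h4
      exact h4.congr_fun (fun x _ => by simp [abs_neg]) measurableSet_Ico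
    exact (h3.union h2').mono_set (fun x hx => by
      rcases lt_or_ge x 0 with h | h
      · exact Or.inl ⟨hx.1, h⟩
      · exact Or.inr ⟨h, hx.2⟩)

lemma sq (R : ℝ) :
    IntegrableOn (fun q : ℝ × ℝ => |q.1| ^ (-(1/4):ℝ) * |q.2| ^ (-(1/4):ℝ))
      ((Icc (-R) R) ×ˢ (Icc (-R) R)) := by
  have h := oneD R
  have h2 := h.mul_prod h
  rwa [IntegrableOn, Measure.volume_eq_prod, ← Measure.prod_restrict]

lemma cx (R : ℝ) :
    IntegrableOn (fun w : ℂ => |w.re| ^ (-(1/4):ℝ) * |w.im| ^ (-(1/4):ℝ))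
      (Complex.measurableEquivRealProd ⁻¹' ((Icc (-R) R) ×ˢ (Icc (-R) R))) := by
  have h := (MeasurePreserving.integrableOn_comp_preimage
      Complex.volume_preserving_equiv_real_prod
      Complex.measurableEquivRealProd.measurableEmbedding
      (f := fun q : ℝ × ℝ => |q.1| ^ (-(1/4):ℝ) * |q.2| ^ (-(1/4):ℝ))
      (s := (Icc (-R) R) ×ˢ (Icc (-R) R))).2 (sq R)
  refine h.congr_fun (fun w _ => ?_)
    (Complex.measurableEquivRealProd.measurable (measurableSet_Icc.prod measurableSet_Icc))
  simp [Function.comp, Complex.measurableEquivRealProd_apply]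

lemma null_axes : (volume : Measure ℂ) {w : ℂ | w.re = 0 ∨ w.im = 0} = 0 := by
  have h : {w : ℂ | w.re = 0 ∨ w.im = 0}
      = Complex.measurableEquivRealProd ⁻¹'
        (({0} ×ˢ (univ : Set ℝ)) ∪ ((univ : Set ℝ) ×ˢ {0})) := by
    ext w
    simp [Complex.measurableEquivRealProd_apply, eq_comm]
  have h0 : (volume : Measure (ℝ × ℝ))
      (({0} ×ˢ (univ : Set ℝ)) ∪ ((univ : Set ℝ) ×ˢ {0})) = 0 := by
    apply measure_union_null <;>
      rw [Measure.volume_eq_prod, Measure.prod_prod] <;> simp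
  have hm : NullMeasurableSet (({0} ×ˢ (univ : Set ℝ)) ∪ ((univ : Set ℝ) ×ˢ {0}))
      (volume : Measure (ℝ × ℝ)) :=
    (((MeasurableSet.singleton 0).prod MeasurableSet.univ).union
      (MeasurableSet.univ.prod (MeasurableSet.singleton 0))).nullMeasurableSet
  rw [h, Complex.volume_preserving_equiv_real_prod.measure_preimage hm, h0]

lemma ae_axes : ∀ᵐ w : ℂ ∂volume, w.re ≠ 0 ∧ w.im ≠ 0 := by
  have h := null_axes
  rw [← compl_mem_ae_iff] at h
  filter_upwards [h] with w hw
  simpa [not_or] using hw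

lemma integrableOn_g_closedBall (p : ℕ) (hp : 1 ≤ p) (R : ℝ) :
    IntegrableOn (g p) (closedBall (0:ℂ) R) := by
  set R' := max R 1 with hR'def
  have hR'1 : (1:ℝ) ≤ R' := le_max_right _ _
  have hsub : closedBall (0:ℂ) R
      ⊆ Complex.measurableEquivRealProd ⁻¹' ((Icc (-R') R') ×ˢ (Icc (-R') R')) := by
    intro w hw
    simp only [mem_closedBall, Complex.dist_eq, sub_zero] at hw
    have habs : ‖w‖ ≤ R' := hw.trans (le_max_left _ _)
    have h1 : |w.re| ≤ R' := (Complex.abs_re_le_norm w).trans habs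
    have h2 : |w.im| ≤ R' := (Complex.abs_im_le_norm w).trans habs
    simp only [mem_preimage, Complex.measurableEquivRealProd_apply, mem_prod, mem_Icc]
    exact ⟨abs_le.mp h1, abs_le.mp h2⟩
  have hGint : IntegrableOn
      (fun w : ℂ => ((2*(p:ℝ)))^p * (|w.re| ^ (-(1/4):ℝ) * |w.im| ^ (-(1/4):ℝ))
        + (Real.log R')^p)
      (closedBall (0:ℂ) R) := by
    refine (((cx R').mono_set hsub).const_mul _).add ?_
    exact integrableOn_const measure_closedBall_lt_top.ne
  refine Integrable.mono' hGint ((measurable_g p).aestronglyMeasurable) ?_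
  filter_upwards [ae_restrict_of_ae ae_axes, ae_restrict_mem measurableSet_closedBall]
    with w hw hwball
  obtain ⟨hre, him⟩ := hw
  have hx0 : 0 < ‖w‖ := by
    have hw0 : w ≠ 0 := fun h => hre (by simp [h])
    exact norm_pos_iff.mpr hw0
  have hxR : ‖w‖ ≤ R' := by
    simp only [mem_closedBall, Complex.dist_eq, sub_zero] at hwball
    exact hwball.trans (le_max_left _ _)
  have hnorm : ‖g p w‖ = |Real.log (‖w‖)| ^ p := by
    rw [Real.norm_eq_abs, abs_of_nonneg (g_nonneg p w)]; rfl
  rw [hnorm]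
  have hlogR' : (0:ℝ) ≤ (Real.log R')^p := pow_nonneg (Real.log_nonneg hR'1) p
  rcases le_or_gt (‖w‖) 1 with hx1 | hx1
  · -- near the singularity
    have hpne : (p:ℝ) ≠ 0 := Nat.cast_ne_zero.mpr (by omega)
    have hppos : (0:ℝ) < p := by positivity
    have hεpos : (0:ℝ) < 1/(2*(p:ℝ)) := by positivity
    have habs : |Real.log (‖w‖)| = Real.log (‖w‖)⁻¹ := by
      rw [Real.log_inv, abs_of_nonpos (Real.log_nonpos hx0.le hx1)]
    have hlog : |Real.log (‖w‖)|
        ≤ (2*(p:ℝ)) * (‖w‖) ^ (-(1/(2*(p:ℝ)))) := by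
      rw [habs]
      calc Real.log (‖w‖)⁻¹
          ≤ ((‖w‖)⁻¹) ^ (1/(2*(p:ℝ))) / (1/(2*(p:ℝ))) :=
            Real.log_le_rpow_div (inv_nonneg.mpr hx0.le) hεpos
        _ = (2*(p:ℝ)) * (‖w‖) ^ (-(1/(2*(p:ℝ)))) := by
            rw [Real.inv_rpow hx0.le, ← Real.rpow_neg hx0.le, div_eq_mul_inv, one_div,
              inv_inv]
            exact mul_comm _ _
    have hpow : |Real.log (‖w‖)| ^ p
        ≤ ((2*(p:ℝ)))^p * (‖w‖) ^ (-(1/2):ℝ) := by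
      calc |Real.log (‖w‖)| ^ p
          ≤ ((2*(p:ℝ)) * (‖w‖) ^ (-(1/(2*(p:ℝ))))) ^ p :=
            pow_le_pow_left₀ (abs_nonneg _) hlog p
        _ = ((2*(p:ℝ)))^p * (‖w‖) ^ (-(1/2):ℝ) := by
            rw [mul_pow, ← Real.rpow_natCast ((‖w‖) ^ (-(1/(2*(p:ℝ))))) p,
              ← Real.rpow_mul hx0.le]
            congr 2
            field_simp
    have hre0 : 0 < |w.re| := abs_pos.mpr hre
    have him0 : 0 < |w.im| := abs_pos.mpr him
    have hxhalf : (‖w‖) ^ (-(1/2):ℝ)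
        ≤ |w.re| ^ (-(1/4):ℝ) * |w.im| ^ (-(1/4):ℝ) := by
      have e1 : (‖w‖) ^ (-(1/4):ℝ) ≤ |w.re| ^ (-(1/4):ℝ) :=
        Real.rpow_le_rpow_of_nonpos hre0 (Complex.abs_re_le_norm w) (by norm_num)
      have e2 : (‖w‖) ^ (-(1/4):ℝ) ≤ |w.im| ^ (-(1/4):ℝ) :=
        Real.rpow_le_rpow_of_nonpos him0 (Complex.abs_im_le_norm w) (by norm_num)
      have e3 : (‖w‖) ^ (-(1/2):ℝ)
          = (‖w‖) ^ (-(1/4):ℝ) * (‖w‖) ^ (-(1/4):ℝ) := by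
        rw [← Real.rpow_add hx0]; norm_num
      rw [e3]
      exact mul_le_mul e1 e2 (Real.rpow_nonneg hx0.le _) (Real.rpow_nonneg (abs_nonneg _) _)
    calc |Real.log (‖w‖)| ^ p
        ≤ ((2*(p:ℝ)))^p * (‖w‖) ^ (-(1/2):ℝ) := hpow
      _ ≤ ((2*(p:ℝ)))^p * (|w.re| ^ (-(1/4):ℝ) * |w.im| ^ (-(1/4):ℝ)) :=
          mul_le_mul_of_nonneg_left hxhalf (by positivity)
      _ ≤ _ := le_add_of_nonneg_right hlogR'
  · -- away from the singularity
    have hlogle : |Real.log (‖w‖)| ≤ Real.log R' := by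
      rw [abs_of_nonneg (Real.log_nonneg hx1.le)]
      exact Real.log_le_log hx0 hxR
    calc |Real.log (‖w‖)| ^ p
        ≤ (Real.log R')^p := pow_le_pow_left₀ (abs_nonneg _) hlogle p
      _ ≤ _ := le_add_of_nonneg_left (by positivity)

lemma sub_left_preimage (z : ℂ) (R : ℝ) :
    (fun w : ℂ => z - w) ⁻¹' (closedBall 0 R) = closedBall z R := by
  ext w
  simp only [mem_preimage, mem_closedBall, Complex.dist_eq, sub_zero]
  rw [norm_sub_rev]

lemma emb_sub_left (z : ℂ) : MeasurableEmbedding (fun w : ℂ => z - w) :=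
  (MeasurableEquiv.subLeft z).measurableEmbedding

lemma integrableOn_g_sub (p : ℕ) (hp : 1 ≤ p) (z : ℂ) (R : ℝ) :
    IntegrableOn (fun w : ℂ => |Real.log (‖z - w‖)| ^ p) (closedBall z R) := by
  have h := (MeasurePreserving.integrableOn_comp_preimage
      (Measure.measurePreserving_sub_left (volume : Measure ℂ) z)
      (emb_sub_left z) (f := g p) (s := closedBall 0 R)).2
      (integrableOn_g_closedBall p hp R)
  rwa [sub_left_preimage] at h

lemma setIntegral_g_sub (p : ℕ) (z : ℂ) (R : ℝ) :
    ∫ w in closedBall z R, |Real.log (‖z - w‖)| ^ p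
      = ∫ u in closedBall (0:ℂ) R, g p u := by
  have h := (Measure.measurePreserving_sub_left (volume : Measure ℂ) z).setIntegral_preimage_emb
      (emb_sub_left z) (g p) (closedBall 0 R)
  rwa [sub_left_preimage] at h

lemma small (p : ℕ) (hp : 1 ≤ p) {ε : ℝ} (hε : 0 < ε) :
    ∃ δ : ℝ, 0 < δ ∧ δ ≤ 1 ∧ ∫ u in closedBall (0:ℂ) δ, g p u < ε := by
  have hrad : ∀ n : ℕ, ((n:ℝ)+1)⁻¹ ≤ 1 := by
    intro n
    rw [inv_le_one_iff₀]
    right; exact le_add_of_nonneg_left (Nat.cast_nonneg n)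
  have key : Tendsto (fun n : ℕ => ∫ u in closedBall (0:ℂ) ((n:ℝ)+1)⁻¹, g p u)
      atTop (𝓝 0) := by
    have heq : ∀ n : ℕ, ∫ u, (closedBall (0:ℂ) ((n:ℝ)+1)⁻¹).indicator (g p) u
        ∂(volume.restrict (closedBall (0:ℂ) 1))
        = ∫ u in closedBall (0:ℂ) ((n:ℝ)+1)⁻¹, g p u := by
      intro n
      rw [integral_indicator measurableSet_closedBall,
        Measure.restrict_restrict measurableSet_closedBall,
        inter_eq_self_of_subset_left (closedBall_subset_closedBall (hrad n))]
    have hdom := tendsto_integral_of_dominated_convergence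
      (μ := volume.restrict (closedBall (0:ℂ) 1))
      (F := fun n u => (closedBall (0:ℂ) ((n:ℝ)+1)⁻¹).indicator (g p) u)
      (f := fun _ => (0:ℝ)) (bound := g p)
      (fun n => ((measurable_g p).indicator measurableSet_closedBall).aestronglyMeasurable)
      (integrableOn_g_closedBall p hp 1)
      (fun n => Eventually.of_forall fun u => by
        rw [Real.norm_eq_abs, abs_of_nonneg (Set.indicator_nonneg (fun x _ => g_nonneg p x) u)]
        exact Set.indicator_le_self' (fun x _ => g_nonneg p x) u)
      ?_
    · simpa only [heq, integral_zero] using hdom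
    · filter_upwards [ae_restrict_of_ae ae_axes] with u hu
      have hu0 : u ≠ 0 := fun h => hu.1 (by simp [h])
      have hupos : 0 < ‖u‖ := norm_pos_iff.mpr hu0
      obtain ⟨N, hN⟩ := exists_nat_gt (‖u‖)⁻¹
      have hev : ∀ᶠ n : ℕ in atTop,
          (closedBall (0:ℂ) ((n:ℝ)+1)⁻¹).indicator (g p) u = 0 := by
        filter_upwards [eventually_ge_atTop N] with n hn
        apply Set.indicator_of_notMem
        simp only [mem_closedBall, Complex.dist_eq, sub_zero, not_le]
        have h1 : (‖u‖)⁻¹ < (n:ℝ)+1 := by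
          calc (‖u‖)⁻¹ < N := hN
            _ ≤ (n:ℝ) := Nat.cast_le.mpr hn
            _ ≤ (n:ℝ)+1 := by linarith
        calc ((n:ℝ)+1)⁻¹ < ((‖u‖)⁻¹)⁻¹ :=
              (inv_lt_inv₀ (by positivity) (by positivity)).mpr h1
          _ = ‖u‖ := inv_inv _
      exact Tendsto.congr' (hev.mono fun n h => h.symm) tendsto_const_nhds
  obtain ⟨n, hn⟩ := (key.eventually_lt_const hε).exists
  exact ⟨((n:ℝ)+1)⁻¹, by positivity, hrad n, hn⟩

end LogPowAux

open LogPowAux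

/-- The function `z ↦ ∫_K (log |z - w|)^p dλ(w)` is continuous for compact `K ⊆ ℂ`. -/
theorem continuous_integral_log_pow (K : Set ℂ) (hK : IsCompact K) (p : ℕ) (hp : 1 ≤ p) :
    Continuous (fun z : ℂ => ∫ w in K, (Real.log (‖z - w‖)) ^ p) := by
  set F : ℂ → ℂ → ℝ := fun z w => (Real.log (‖z - w‖)) ^ p with hFdef
  set G : ℂ → ℂ → ℝ := fun z w => |Real.log (‖z - w‖)| ^ p with hGdef
  show Continuous (fun z : ℂ => ∫ w in K, F z w)
  have hnormF : ∀ z w, ‖F z w‖ = G z w := by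
    intro z w
    rw [hFdef, hGdef, Real.norm_eq_abs, abs_pow]
  have hGnn : ∀ z w, 0 ≤ G z w := fun z w => pow_nonneg (abs_nonneg _) p
  have hFmeas : ∀ z : ℂ, Measurable (F z) := by
    intro z
    exact (Real.measurable_log.comp (continuous_norm.measurable.comp
      (measurable_const.sub measurable_id))).pow_const p
  obtain ⟨R₀, hR₀⟩ := hK.isBounded.subset_closedBall 0
  have hKm : MeasurableSet K := hK.isClosed.measurableSet
  have hGK : ∀ z : ℂ, IntegrableOn (G z) K := by
    intro z
    refine (integrableOn_g_sub p hp z (‖z‖ + R₀)).mono_set ?_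
    intro w hw
    have h1 : ‖w‖ ≤ R₀ := by
      have h2 := hR₀ hw
      simpa [Complex.dist_eq] using h2
    simp only [mem_closedBall, Complex.dist_eq]
    calc ‖w - z‖ ≤ ‖w‖ + ‖z‖ := by
          simpa [sub_eq_add_neg] using norm_add_le w (-z)
      _ ≤ ‖z‖ + R₀ := by linarith
  have hFK : ∀ z : ℂ, IntegrableOn (F z) K := by
    intro z
    exact Integrable.mono' (hGK z) ((hFmeas z).aestronglyMeasurable)
      (Eventually.of_forall fun w => le_of_eq (hnormF z w))
  rw [continuous_iff_continuousAt]
  intro z₀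
  rw [ContinuousAt, Metric.tendsto_nhds]
  intro ε hε
  obtain ⟨δ', hδ'pos, hδ'le, hδ'int⟩ := small p hp (show (0:ℝ) < ε/4 by linarith)
  set δ : ℝ := δ'/3 with hδdef
  have hδpos : 0 < δ := by positivity
  have hδ1 : δ ≤ 1 := by
    rw [hδdef]; linarith
  set B : Set ℂ := closedBall z₀ (2*δ) with hBdef
  have hBm : MeasurableSet B := measurableSet_closedBall
  set S₁ : Set ℂ := K \ B with hS₁def
  set S₂ : Set ℂ := K ∩ B with hS₂def
  have hS₁m : MeasurableSet S₁ := hKm.diff hBm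
  have hS₂m : MeasurableSet S₂ := hKm.inter hBm
  have hsplit : ∀ z : ℂ, ∫ w in K, F z w = (∫ w in S₁, F z w) + ∫ w in S₂, F z w := by
    intro z
    have hdisj : Disjoint S₁ S₂ := by
      rw [Set.disjoint_left]
      rintro w ⟨hwK, hwB⟩ hw2
      exact hwB hw2.2
    rw [← setIntegral_union hdisj hS₂m
      ((hFK z).mono_set diff_subset) ((hFK z).mono_set inter_subset_left),
      diff_union_inter]
  -- bound on the near part
  have hnear : ∀ z : ℂ, dist z z₀ ≤ δ → |∫ w in S₂, F z w| < ε/4 := by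
    intro z hz
    have hsub : S₂ ⊆ closedBall z δ' := by
      intro w hw
      have hwB : dist w z₀ ≤ 2*δ := hw.2
      simp only [mem_closedBall]
      calc dist w z ≤ dist w z₀ + dist z₀ z := dist_triangle _ _ _
        _ ≤ 2*δ + δ := by rw [dist_comm z₀ z]; linarith
        _ = δ' := by rw [hδdef]; ring
    have hint3 : IntegrableOn (G z) (closedBall z δ') := integrableOn_g_sub p hp z δ'
    have h1 : |∫ w in S₂, F z w| ≤ ∫ w in S₂, G z w := by
      calc |∫ w in S₂, F z w| ≤ ∫ w in S₂, ‖F z w‖ := by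
            rw [← Real.norm_eq_abs]
            exact norm_integral_le_integral_norm _
        _ = ∫ w in S₂, G z w := by
            congr 1
            ext w
            exact hnormF z w
    have h2 : ∫ w in S₂, G z w ≤ ∫ w in closedBall z δ', G z w :=
      setIntegral_mono_set hint3 (Eventually.of_forall fun w => hGnn z w)
        (HasSubset.Subset.eventuallyLE hsub)
    have h3 : ∫ w in closedBall z δ', G z w = ∫ u in closedBall (0:ℂ) δ', g p u :=
      setIntegral_g_sub p z δ'
    calc |∫ w in S₂, F z w| ≤ ∫ w in closedBall z δ', G z w := h1.trans h2
      _ = ∫ u in closedBall (0:ℂ) δ', g p u := h3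
      _ < ε/4 := hδ'int
  -- continuity of the far part
  have hfar : ContinuousAt (fun z => ∫ w in S₁, F z w) z₀ := by
    set R₁ : ℝ := ‖z₀‖ + 1 + R₀ with hR₁def
    set M : ℝ := max (Real.log R₁) (-Real.log δ) with hMdef
    apply continuousAt_of_dominated (bound := fun _ => M ^ p)
    · exact Eventually.of_forall fun z => ((hFmeas z).aestronglyMeasurable)
    · filter_upwards [Metric.ball_mem_nhds z₀ hδpos] with z hz
      filter_upwards [ae_restrict_mem hS₁m] with w hw
      have hwK : w ∈ K := hw.1
      have hwB : 2*δ < dist w z₀ := by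
        by_contra h
        exact hw.2 (mem_closedBall.mpr (not_lt.mp h))
      have hzd : dist z z₀ < δ := mem_ball.mp hz
      have hdzw : dist w z = ‖z - w‖ := by
        rw [Complex.dist_eq]
        exact norm_sub_rev _ _
      have hxlow : δ < ‖z - w‖ := by
        have ht : dist w z₀ ≤ dist w z + dist z z₀ := dist_triangle _ _ _
        rw [hdzw] at ht
        linarith
      have hx0 : 0 < ‖z - w‖ := lt_trans hδpos hxlow
      have hxup : ‖z - w‖ ≤ R₁ := by
        have h1 : ‖w‖ ≤ R₀ := by
          have h2 := hR₀ hwK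
          simpa [Complex.dist_eq] using h2
        have h2 : ‖z‖ ≤ ‖z₀‖ + δ := by
          have h3 : dist z 0 ≤ dist z z₀ + dist z₀ 0 := dist_triangle _ _ _
          have h4 : dist z 0 = ‖z‖ := by rw [Complex.dist_eq, sub_zero]
          have h5 : dist z₀ 0 = ‖z₀‖ := by rw [Complex.dist_eq, sub_zero]
          rw [h4, h5] at h3
          linarith
        calc ‖z - w‖ ≤ ‖z‖ + ‖w‖ := by
              simpa [sub_eq_add_neg] using norm_add_le z (-w)
          _ ≤ (‖z₀‖ + δ) + R₀ := by linarith
          _ ≤ R₁ := by rw [hR₁def]; linarith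
      have hlogx : |Real.log (‖z - w‖)| ≤ M := by
        have h1 : Real.log (‖z - w‖) ≤ Real.log R₁ := Real.log_le_log hx0 hxup
        have h2 : Real.log δ ≤ Real.log (‖z - w‖) := Real.log_le_log hδpos hxlow.le
        rw [abs_le]
        constructor
        · have h3 : -M ≤ Real.log δ := by
            have h4 := le_max_right (Real.log R₁) (-Real.log δ)
            rw [← hMdef] at h4
            linarith
          linarith
        · exact h1.trans (le_max_left _ _)
      calc ‖F z w‖ = |Real.log (‖z - w‖)| ^ p := hnormF z w
        _ ≤ M ^ p := pow_le_pow_left₀ (abs_nonneg _) hlogx p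
    · exact integrableOn_const
        ((measure_mono (diff_subset)).trans_lt hK.measure_lt_top).ne
    · filter_upwards [ae_restrict_mem hS₁m] with w hw
      have hne : ‖z₀ - w‖ ≠ 0 := by
        have hwB : 2*δ < dist w z₀ := by
          by_contra h
          exact hw.2 (mem_closedBall.mpr (not_lt.mp h))
        have h0 : 0 < dist w z₀ := lt_trans (by positivity) hwB
        rw [dist_comm, Complex.dist_eq] at h0
        exact ne_of_gt h0
      have hc1 : ContinuousAt (fun z : ℂ => ‖z - w‖) z₀ :=
        (continuous_norm.comp (continuous_id.sub continuous_const)).continuousAt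
      have hc2 : ContinuousAt (fun z : ℂ => Real.log (‖z - w‖)) z₀ :=
        ContinuousAt.comp (g := Real.log) (f := fun z : ℂ => ‖z - w‖) (x := z₀)
          (Real.continuousAt_log hne) hc1
      exact hc2.pow p
  have h1 : ∀ᶠ z in 𝓝 z₀, |(∫ w in S₁, F z w) - ∫ w in S₁, F z₀ w| < ε/4 := by
    have h2 := hfar
    rw [ContinuousAt, Metric.tendsto_nhds] at h2
    filter_upwards [h2 (ε/4) (by linarith)] with z hz
    rwa [Real.dist_eq] at hz
  filter_upwards [h1, Metric.ball_mem_nhds z₀ hδpos] with z hz1 hz2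
  have hz : dist z z₀ ≤ δ := (mem_ball.mp hz2).le
  have h2 := hnear z hz
  have h3 := hnear z₀ (by simp [hδpos.le])
  rw [Real.dist_eq, hsplit z, hsplit z₀]
  have h4 : |(∫ w in S₂, F z w) - ∫ w in S₂, F z₀ w|
      ≤ |∫ w in S₂, F z w| + |∫ w in S₂, F z₀ w| := by
    rw [sub_eq_add_neg]
    exact (abs_add_le _ _).trans (by rw [abs_neg])
  have h5 : |((∫ w in S₁, F z w) + ∫ w in S₂, F z w)
      - ((∫ w in S₁, F z₀ w) + ∫ w in S₂, F z₀ w)|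
      ≤ |(∫ w in S₁, F z w) - ∫ w in S₁, F z₀ w|
        + |(∫ w in S₂, F z w) - ∫ w in S₂, F z₀ w| := by
    have h6 : ((∫ w in S₁, F z w) + ∫ w in S₂, F z w)
        - ((∫ w in S₁, F z₀ w) + ∫ w in S₂, F z₀ w)
        = ((∫ w in S₁, F z w) - ∫ w in S₁, F z₀ w)
          + ((∫ w in S₂, F z w) - ∫ w in S₂, F z₀ w) := by ring
    rw [h6]
    exact abs_add_le _ _
  linarith
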